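/- Let m₁ ≥ m₂, let α be an m₂×m₁ complex matrix with αα* = I_{m₂}, let c = 1/2, and define β(x) = [e^{icx}α, e^{−icx}I_{m₂}] (an m₂×m matrix function, m = m₁+m₂). Then β satisfies conditions (1.4); the Hamiltonian H(x) = β(x)*β(x) equals e^{−icxj} 𝒦 e^{icxj}, where 𝒦 is the m×m block matrix [[α*α, α*],[α, I_{m₂}]]; and the matrix function W(x,λ) := e^{−icxj} · exp( i x (λ j 𝒦 + c j) ) satisfies W(0,λ) = I_m and ∂W/∂x (x,λ) = iλ j H(x) W(x,λ) for all x ≥ 0 and λ ∈ ℂ, i.e., W is the normalised fundamental solution of the generalised canonical system with Hamiltonian H. -/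

import Mathlib

open MeasureTheory Set Filter Complex Matrix

noncomputable section

/-- The signature matrix `j = diag(I_{m₁}, -I_{m₂})`. -/
def sigJ (m₁ m₂ : ℕ) : Matrix (Fin m₁ ⊕ Fin m₂) (Fin m₁ ⊕ Fin m₂) ℂ :=
  Matrix.fromBlocks 1 0 0 (-1)

/-- The matrix function `β(x) = [e^{icx}α, e^{-icx}I_{m₂}]` with `c = 1/2`. -/
def βex {m₁ m₂ : ℕ} (α : Matrix (Fin m₂) (Fin m₁) ℂ) (x : ℝ) :
    Matrix (Fin m₂) (Fin m₁ ⊕ Fin m₂) ℂ :=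
  Matrix.of fun i s =>
    Sum.casesOn s
      (fun a => Complex.exp (Complex.I * (1/2) * (x : ℂ)) * α i a)
      (fun b => Complex.exp (-(Complex.I * (1/2) * (x : ℂ))) * if i = b then (1:ℂ) else 0)

/-- The block matrix `𝒦 = [[α*α, α*],[α, I]]`. -/
def Kex {m₁ m₂ : ℕ} (α : Matrix (Fin m₂) (Fin m₁) ℂ) :
    Matrix (Fin m₁ ⊕ Fin m₂) (Fin m₁ ⊕ Fin m₂) ℂ :=
  Matrix.fromBlocks (αᴴ * α) αᴴ α 1

/-- The candidate fundamental solution `W(x,λ) = e^{-icxj} exp(ix(λj𝒦 + cj))`, `c = 1/2`. -/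
def Wex {m₁ m₂ : ℕ} (α : Matrix (Fin m₂) (Fin m₁) ℂ) (x : ℝ) (lam : ℂ) :
    Matrix (Fin m₁ ⊕ Fin m₂) (Fin m₁ ⊕ Fin m₂) ℂ :=
  NormedSpace.exp ((-(Complex.I * (1/2) * (x : ℂ))) • sigJ m₁ m₂) *
    NormedSpace.exp ((Complex.I * (x : ℂ)) •
      (lam • (sigJ m₁ m₂ * Kex α) + ((1:ℂ)/2) • sigJ m₁ m₂))

/-! ### Auxiliary lemmas -/

lemma sigJ_eq (m₁ m₂ : ℕ) : sigJ m₁ m₂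
    = Matrix.diagonal (Sum.elim (fun _ => (1:ℂ)) (fun _ => -1)) := by
  ext (i|i) (j|j) <;>
    simp [sigJ, Matrix.diagonal_apply, Matrix.one_apply, eq_comm] <;>
    split <;> simp

lemma expJ (m₁ m₂ : ℕ) (z : ℂ) : NormedSpace.exp (z • sigJ m₁ m₂) =
    Matrix.diagonal (Sum.elim (fun _ => Complex.exp z) (fun _ => Complex.exp (-z))) := by
  have h : z • sigJ m₁ m₂ = Matrix.diagonal (Sum.elim (fun _ => z) (fun _ => -z)) := by
    rw [sigJ_eq]
    ext s t
    rcases s with s|s <;> rcases t with t|t <;>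
      simp [Matrix.diagonal_apply, Sum.elim]
  rw [h, Matrix.exp_diagonal]
  ext s t
  rcases s with s|s <;> rcases t with t|t <;>
    simp [Matrix.diagonal_apply, Pi.exp_def, ← Complex.exp_eq_exp_ℂ]

lemma conj_Ic (x : ℝ) : (starRingEnd ℂ) (Complex.I * (1/2) * x)
    = -(Complex.I * (1/2) * (x:ℂ)) := by
  simp only [_root_.map_mul, map_div₀, _root_.map_one, map_ofNat, Complex.conj_I,
    Complex.conj_ofReal]
  ring

lemma conj_exp_Ic (x : ℝ) : (starRingEnd ℂ) (Complex.exp (Complex.I * (1/2) * x))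
    = Complex.exp (-(Complex.I * (1/2) * x)) := by
  rw [← Complex.exp_conj, conj_Ic]

lemma conj_exp_Ic' (x : ℝ) : (starRingEnd ℂ) (Complex.exp (-(Complex.I * (1/2) * x)))
    = Complex.exp (Complex.I * (1/2) * x) := by
  rw [← Complex.exp_conj, map_neg, conj_Ic, neg_neg]

lemma exp_mul_exp_neg (x : ℝ) :
    Complex.exp (Complex.I * (1/2) * x) * Complex.exp (-(Complex.I * (1/2) * x)) = 1 := by
  rw [← Complex.exp_add]; simp

/-- The derivative of `βex`. -/
def βex' {m₁ m₂ : ℕ} (α : Matrix (Fin m₂) (Fin m₁) ℂ) (x : ℝ) :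
    Matrix (Fin m₂) (Fin m₁ ⊕ Fin m₂) ℂ :=
  Matrix.of fun i s =>
    Sum.casesOn s
      (fun a => Complex.I * (1/2) * Complex.exp (Complex.I * (1/2) * (x : ℂ)) * α i a)
      (fun b => -(Complex.I * (1/2)) * Complex.exp (-(Complex.I * (1/2) * (x : ℂ))) *
        if i = b then (1:ℂ) else 0)

lemma βex_hasDerivAt {m₁ m₂ : ℕ} (α : Matrix (Fin m₂) (Fin m₁) ℂ) (x : ℝ) (i : Fin m₂)
    (s : Fin m₁ ⊕ Fin m₂) :
    HasDerivAt (fun y : ℝ => βex α y i s) (βex' α x i s) x := by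
  have h0 : HasDerivAt (fun y : ℝ => (y : ℂ)) 1 x := Complex.ofRealCLM.hasDerivAt
  have h1 : HasDerivAt (fun y : ℝ => Complex.I * (1/2) * (y:ℂ)) (Complex.I * (1/2)) x := by
    simpa using h0.const_mul (Complex.I * (1/2))
  rcases s with a | b
  · have h2 := (h1.cexp).mul_const (α i a)
    convert h2 using 1
    · rfl
    · rfl
    simp only [βex', Matrix.of_apply]
    ring
  · have h2 := ((h1.neg).cexp).mul_const (if i = b then (1:ℂ) else 0)
    convert h2 using 1
    · rfl
    · rfl
    simp only [βex', Matrix.of_apply, Pi.neg_apply]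
    ring

lemma βjβ {m₁ m₂ : ℕ} (α : Matrix (Fin m₂) (Fin m₁) ℂ) (hα : α * αᴴ = 1) (x : ℝ) :
    βex α x * sigJ m₁ m₂ * (βex α x)ᴴ = 0 := by
  have hα' : ∀ i k, (∑ a, α i a * (starRingEnd ℂ) (α k a)) = if i = k then (1:ℂ) else 0 := by
    intro i k
    have := congrFun (congrFun hα i) k
    simpa [Matrix.mul_apply, Matrix.one_apply, Matrix.conjTranspose_apply] using this
  ext i k
  rw [sigJ_eq]
  simp only [Matrix.mul_apply, Matrix.mul_diagonal, Matrix.conjTranspose_apply, βex,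
    Matrix.of_apply, Fintype.sum_sum_type, Sum.elim_inl, Sum.elim_inr, Matrix.zero_apply,
    conj_exp_Ic, conj_exp_Ic', _root_.map_mul]
  simp only [Matrix.diagonal_apply, Sum.elim_inl, Sum.elim_inr, Sum.inl.injEq, Sum.inr.injEq,
    reduceCtorEq, if_true, if_false, mul_ite, ite_mul, mul_one, one_mul, mul_zero, zero_mul,
    mul_neg_one, neg_zero, Finset.sum_ite_eq, Finset.sum_ite_eq', Finset.sum_const_zero,
    Finset.sum_neg_distrib, add_zero, zero_add, Finset.mem_univ, if_pos, Complex.star_def,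
    star_mul', conj_exp_Ic, conj_exp_Ic', apply_ite, map_zero, neg_mul, mul_neg, neg_neg]
  have hEF := exp_mul_exp_neg x
  generalize hg1 : Complex.exp (Complex.I * (1/2) * (x:ℂ)) = E at hEF ⊢
  generalize hg2 : Complex.exp (-(Complex.I * (1/2) * (x:ℂ))) = F at hEF ⊢
  have h1 : (∑ a, E * α i a * (F * (starRingEnd ℂ) (α k a)))
      = E * F * ∑ a, α i a * (starRingEnd ℂ) (α k a) := by
    rw [Finset.mul_sum]
    exact Finset.sum_congr rfl fun a _ => by ring
  rw [h1, hEF, one_mul, hα']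
  rw [mul_comm] at hEF
  by_cases h : i = k <;> simp [h, eq_comm, hEF]

lemma βjβ' {m₁ m₂ : ℕ} (α : Matrix (Fin m₂) (Fin m₁) ℂ) (hα : α * αᴴ = 1) (x : ℝ) :
    βex' α x * sigJ m₁ m₂ * (βex α x)ᴴ = Complex.I • (1 : Matrix (Fin m₂) (Fin m₂) ℂ) := by
  have hα' : ∀ i k, (∑ a, α i a * (starRingEnd ℂ) (α k a)) = if i = k then (1:ℂ) else 0 := by
    intro i k
    have := congrFun (congrFun hα i) k
    simpa [Matrix.mul_apply, Matrix.one_apply, Matrix.conjTranspose_apply] using this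
  ext i k
  rw [sigJ_eq]
  simp only [Matrix.mul_apply, Matrix.mul_diagonal, Matrix.conjTranspose_apply, βex, βex',
    Matrix.of_apply, Fintype.sum_sum_type, Sum.elim_inl, Sum.elim_inr, Matrix.smul_apply,
    Matrix.one_apply, smul_eq_mul, conj_exp_Ic, conj_exp_Ic', _root_.map_mul]
  simp only [Matrix.diagonal_apply, Sum.elim_inl, Sum.elim_inr, Sum.inl.injEq, Sum.inr.injEq,
    reduceCtorEq, if_true, if_false, mul_ite, ite_mul, mul_one, one_mul, mul_zero, zero_mul,
    mul_neg_one, neg_zero, Finset.sum_ite_eq, Finset.sum_ite_eq', Finset.sum_const_zero,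
    Finset.sum_neg_distrib, add_zero, zero_add, Finset.mem_univ, if_pos, Complex.star_def,
    star_mul', conj_exp_Ic, conj_exp_Ic', apply_ite, map_zero, neg_mul, mul_neg, neg_neg]
  have hEF := exp_mul_exp_neg x
  generalize hg1 : Complex.exp (Complex.I * (1/2) * (x:ℂ)) = E at hEF ⊢
  generalize hg2 : Complex.exp (-(Complex.I * (1/2) * (x:ℂ))) = F at hEF ⊢
  have h1 : (∑ a, Complex.I * (1/2) * E * α i a * (F * (starRingEnd ℂ) (α k a)))
      = Complex.I * (1/2) * (E * F) * ∑ a, α i a * (starRingEnd ℂ) (α k a) := by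
    rw [Finset.mul_sum]
    exact Finset.sum_congr rfl fun a _ => by ring
  rw [h1, hEF, hα']
  by_cases h : i = k
  · simp only [h, if_true, if_false, eq_comm]
    rw [show Complex.I * (1/2) * F * E = Complex.I * (1/2) * (E * F) by ring, hEF]
    ring
  · simp only [h, if_true, if_false, eq_comm]
    simp [h]

lemma hamiltonian_eq {m₁ m₂ : ℕ} (α : Matrix (Fin m₂) (Fin m₁) ℂ) (x : ℝ) :
    (βex α x)ᴴ * βex α x
      = NormedSpace.exp ((-(Complex.I * (1/2) * (x : ℂ))) • sigJ m₁ m₂) * Kex α *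
          NormedSpace.exp ((Complex.I * (1/2) * (x : ℂ)) • sigJ m₁ m₂) := by
  rw [expJ, expJ, neg_neg]
  ext s t
  rcases s with a | b <;> rcases t with a' | b' <;>
    simp only [Matrix.mul_diagonal, Matrix.diagonal_mul, Matrix.diagonal_apply, Sum.elim_inl,
      Sum.elim_inr] <;>
    simp only [Matrix.mul_apply, Matrix.diagonal_mul, Matrix.mul_diagonal, Sum.elim_inl,
      Sum.elim_inr, Matrix.conjTranspose_apply, βex, Matrix.of_apply, Kex,
      Matrix.fromBlocks_apply₁₁, Matrix.fromBlocks_apply₁₂, Matrix.fromBlocks_apply₂₁,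
      Matrix.fromBlocks_apply₂₂, Complex.star_def, _root_.map_mul, conj_exp_Ic, conj_exp_Ic',
      Matrix.one_apply, apply_ite, map_zero, _root_.map_one, mul_ite, ite_mul, mul_one, one_mul,
      mul_zero, zero_mul, Finset.sum_ite_eq, Finset.sum_ite_eq', Finset.mem_univ, if_true,
      Fintype.sum_sum_type, Finset.sum_const_zero, add_zero, zero_add, Finset.mul_sum,
      Finset.sum_mul] <;>
    first
      | (exact Finset.sum_congr rfl fun i _ => by ring1)
      | ring1
      | (by_cases h : b = b' <;> simp [h, eq_comm])

lemma Wex_zero {m₁ m₂ : ℕ} (α : Matrix (Fin m₂) (Fin m₁) ℂ) (lam : ℂ) :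
    Wex α 0 lam = 1 := by
  simp [Wex, NormedSpace.exp_zero]

lemma QP_one {m₁ m₂ : ℕ} (x : ℝ) :
    NormedSpace.exp ((Complex.I * (1/2) * (x:ℂ)) • sigJ m₁ m₂) *
      NormedSpace.exp ((-(Complex.I * (1/2) * (x:ℂ))) • sigJ m₁ m₂) = 1 := by
  rw [expJ, expJ, Matrix.diagonal_mul_diagonal]
  ext s t
  rcases s with s|s <;> rcases t with t|t <;>
    simp [Matrix.diagonal_apply, Matrix.one_apply, ← Complex.exp_add]

lemma JP_comm {m₁ m₂ : ℕ} (z : ℂ) :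
    sigJ m₁ m₂ * NormedSpace.exp (z • sigJ m₁ m₂)
      = NormedSpace.exp (z • sigJ m₁ m₂) * sigJ m₁ m₂ := by
  rw [expJ, sigJ_eq, Matrix.diagonal_mul_diagonal, Matrix.diagonal_mul_diagonal]
  congr 1
  funext s
  cases s <;> simp [mul_comm]

lemma Wex_hasDerivAt {m₁ m₂ : ℕ} (α : Matrix (Fin m₂) (Fin m₁) ℂ) (lam : ℂ) (x : ℝ)
    (i k : Fin m₁ ⊕ Fin m₂) :
    HasDerivAt (fun y : ℝ => Wex α y lam i k)
      ((Complex.I * lam) *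
        (sigJ m₁ m₂ * ((βex α x)ᴴ * βex α x) * Wex α x lam) i k) x := by
  letI : SeminormedRing (Matrix (Fin m₁ ⊕ Fin m₂) (Fin m₁ ⊕ Fin m₂) ℂ) :=
    Matrix.linftyOpSemiNormedRing
  letI : NormedRing (Matrix (Fin m₁ ⊕ Fin m₂) (Fin m₁ ⊕ Fin m₂) ℂ) :=
    Matrix.linftyOpNormedRing
  letI : NormedAlgebra ℝ (Matrix (Fin m₁ ⊕ Fin m₂) (Fin m₁ ⊕ Fin m₂) ℂ) :=
    Matrix.linftyOpNormedAlgebra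
  letI : NormedAlgebra ℂ (Matrix (Fin m₁ ⊕ Fin m₂) (Fin m₁ ⊕ Fin m₂) ℂ) :=
    Matrix.linftyOpNormedAlgebra
  set A : Matrix (Fin m₁ ⊕ Fin m₂) (Fin m₁ ⊕ Fin m₂) ℂ :=
    (-(Complex.I * (1/2))) • sigJ m₁ m₂ with hAdef
  set B : Matrix (Fin m₁ ⊕ Fin m₂) (Fin m₁ ⊕ Fin m₂) ℂ :=
    Complex.I • (lam • (sigJ m₁ m₂ * Kex α) + ((1:ℂ)/2) • sigJ m₁ m₂) with hBdef
  have hexp : (NormedSpace.exp :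
      Matrix (Fin m₁ ⊕ Fin m₂) (Fin m₁ ⊕ Fin m₂) ℂ → _) = NormedSpace.exp :=
    rfl
  have hA : ∀ y : ℝ, (-(Complex.I * (1/2) * (y:ℂ))) • sigJ m₁ m₂ = y • A := by
    intro y
    ext s t
    simp [hAdef, Matrix.smul_apply, Complex.real_smul, smul_eq_mul]
    ring
  have hB : ∀ y : ℝ,
      (Complex.I * (y:ℂ)) • (lam • (sigJ m₁ m₂ * Kex α) + ((1:ℂ)/2) • sigJ m₁ m₂) = y • B := by
    intro y
    ext s t
    simp [hBdef, Matrix.smul_apply, Matrix.add_apply, Complex.real_smul, smul_eq_mul]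
    ring
  have hWdef : ∀ y : ℝ, Wex α y lam
      = NormedSpace.exp (y • A) * NormedSpace.exp (y • B) := by
    intro y
    rw [Wex, hA, hB, hexp]
  have hE : HasDerivAt (fun y : ℝ => NormedSpace.exp (y • A))
      (A * NormedSpace.exp (x • A)) x := hasDerivAt_exp_smul_const' A x
  have hF : HasDerivAt (fun y : ℝ => NormedSpace.exp (y • B))
      (B * NormedSpace.exp (x • B)) x := hasDerivAt_exp_smul_const' B x
  have hprod := hE.mul hF
  -- the value identity
  have hval : A * NormedSpace.exp (x • A) * NormedSpace.exp (x • B) +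
      NormedSpace.exp (x • A) * (B * NormedSpace.exp (x • B))
      = (Complex.I * lam) • (sigJ m₁ m₂ * ((βex α x)ᴴ * βex α x) * Wex α x lam) := by
    rw [hexp, hamiltonian_eq α x, hWdef x, hexp, ← hA x, ← hB x]
    set P := NormedSpace.exp ((-(Complex.I * (1/2) * (x:ℂ))) • sigJ m₁ m₂) with hP
    set Q := NormedSpace.exp ((Complex.I * (1/2) * (x:ℂ)) • sigJ m₁ m₂) with hQ
    set Fx := NormedSpace.exp ((Complex.I * (x:ℂ)) •
      (lam • (sigJ m₁ m₂ * Kex α) + ((1:ℂ)/2) • sigJ m₁ m₂)) with hFx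
    have hQP : Q * P = 1 := QP_one x
    have hJP : sigJ m₁ m₂ * P = P * sigJ m₁ m₂ := JP_comm _
    have hAP : A * P = P * A := by
      rw [hAdef, Matrix.smul_mul, Matrix.mul_smul, hJP]
    have hAB : A + B = (Complex.I * lam) • (sigJ m₁ m₂ * Kex α) := by
      ext s t
      simp [hAdef, hBdef, Matrix.smul_apply, Matrix.add_apply, smul_eq_mul]
      ring
    have hRHS : sigJ m₁ m₂ * (P * Kex α * Q) * (P * Fx)
        = P * (sigJ m₁ m₂ * Kex α) * Fx := by
      have h1 : sigJ m₁ m₂ * (P * Kex α * Q) * (P * Fx)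
          = (sigJ m₁ m₂ * P) * Kex α * (Q * P) * Fx := by
        simp only [Matrix.mul_assoc]
      rw [h1, hQP, Matrix.mul_one, hJP]
      simp only [Matrix.mul_assoc]
    rw [hRHS, hAP]
    calc P * A * Fx + P * (B * Fx) = P * (A + B) * Fx := by noncomm_ring
      _ = (Complex.I * lam) • (P * (sigJ m₁ m₂ * Kex α) * Fx) := by
          rw [hAB, Matrix.mul_smul, Matrix.smul_mul]
  -- entry extraction
  let L : Matrix (Fin m₁ ⊕ Fin m₂) (Fin m₁ ⊕ Fin m₂) ℂ →ₗ[ℝ] ℂ :=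
    { toFun := fun M => M i k
      map_add' := fun _ _ => rfl
      map_smul' := fun _ _ => rfl }
  have hcomp := L.toContinuousLinearMap.hasFDerivAt.comp_hasDerivAt x hprod
  have heq : (fun y : ℝ => Wex α y lam i k)
      = fun y => L.toContinuousLinearMap
          (NormedSpace.exp (y • A) * NormedSpace.exp (y • B)) := by
    funext y
    rw [hWdef y]
    rfl
  rw [heq]
  convert hcomp using 1
  · rfl
  · rfl
  calc (Complex.I * lam) * (sigJ m₁ m₂ * ((βex α x)ᴴ * βex α x) * Wex α x lam) i k
      = ((Complex.I * lam) • (sigJ m₁ m₂ * ((βex α x)ᴴ * βex α x) * Wex α x lam)) i k := by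
        simp [Matrix.smul_apply, smul_eq_mul]
    _ = (A * NormedSpace.exp (x • A) * NormedSpace.exp (x • B) +
          NormedSpace.exp (x • A) * (B * NormedSpace.exp (x • B))) i k := by rw [hval]
    _ = L.toContinuousLinearMap (A * NormedSpace.exp (x • A) * NormedSpace.exp (x • B) +
          NormedSpace.exp (x • A) * (B * NormedSpace.exp (x • B))) := rfl

/-- Example 2.3: `β` satisfies (1.4), the Hamiltonian
`H = β*β` equals `e^{-icxj}𝒦e^{icxj}`, and `W(x,λ) = e^{-icxj}e^{ix(λj𝒦+cj)}` is
the normalised fundamental solution of the generalised canonical system. -/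
theorem statement18 {m₁ m₂ : ℕ} (hm : m₂ ≤ m₁)
    (α : Matrix (Fin m₂) (Fin m₁) ℂ) (hα : α * αᴴ = 1) :
    (∃ β' : ℝ → Matrix (Fin m₂) (Fin m₁ ⊕ Fin m₂) ℂ,
      (∀ (x : ℝ) (i : Fin m₂) (s : Fin m₁ ⊕ Fin m₂),
        HasDerivAt (fun y : ℝ => βex α y i s) (β' x i s) x) ∧
      (∀ x : ℝ, 0 ≤ x →
        βex α x * sigJ m₁ m₂ * (βex α x)ᴴ = 0 ∧
        β' x * sigJ m₁ m₂ * (βex α x)ᴴ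
          = Complex.I • (1 : Matrix (Fin m₂) (Fin m₂) ℂ))) ∧
    (∀ x : ℝ, 0 ≤ x →
      (βex α x)ᴴ * βex α x
        = NormedSpace.exp ((-(Complex.I * (1/2) * (x : ℂ))) • sigJ m₁ m₂) * Kex α *
            NormedSpace.exp ((Complex.I * (1/2) * (x : ℂ)) • sigJ m₁ m₂)) ∧
    (∀ lam : ℂ, Wex α 0 lam = 1) ∧
    (∀ (lam : ℂ) (x : ℝ), 0 ≤ x → ∀ i k,
      HasDerivAt (fun y : ℝ => Wex α y lam i k)
        ((Complex.I * lam) *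
          (sigJ m₁ m₂ * ((βex α x)ᴴ * βex α x) * Wex α x lam) i k) x) := by
  refine ⟨⟨βex' α, fun x i s => βex_hasDerivAt α x i s,
    fun x _ => ⟨βjβ α hα x, βjβ' α hα x⟩⟩,
    fun x _ => hamiltonian_eq α x,
    fun lam => Wex_zero α lam,
    fun lam x _ i k => Wex_hasDerivAt α lam x i k⟩
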